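/- Let φ be a 3-CNF formula with variables x_1,…,x_N and clauses C_1,…,C_M, each clause containing at most three literals. Set α = N + 3M and U = {1,…,2N+3M}, and for each i ∈ {1,…,N} define T_i = {α−i+1, α+i} ∪ {3j : x_i ∈ C_j} ∪ {3j−1 : ¬x_i ∈ C_j} and F_i = {α−i+1, α+i} ∪ {3j : ¬x_i ∈ C_j} ∪ {3j−1 : x_i ∈ C_j}. If the Inclusive Set Cover instance with ground set U, family (T_1,…,T_N, F_1,…,F_N) and budget k = N is a yes-instance, then φ is satisfiable. -/

import Mathlib

/-- Inclusive Set Cover: ground set `{1,…,n}`, family `S` indexed by `ι`, budget `k`.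
The instance is a yes-instance if some subfamily `R` with `|R| ≤ k` admits a surjection `f`
from the disjoint union `⊔_{i∈R} S_i` onto `{1,…,n}` with `f (v,i) ≤ v` everywhere. -/
def InclusiveSetCoverYes {ι : Type*} (n : ℕ) (S : ι → Finset ℕ) (k : ℕ) : Prop :=
  ∃ (R : Finset ι) (f : {p : ℕ × ι // p.2 ∈ R ∧ p.1 ∈ S p.2} → {u : ℕ // u ∈ Finset.Icc 1 n}),
    R.card ≤ k ∧ Function.Surjective f ∧ ∀ p, (f p : ℕ) ≤ p.1.1

/-- The set `T_i = {α−i+1, α+i} ∪ {3j : x_i ∈ C_j} ∪ {3j−1 : ¬x_i ∈ C_j}` where `α = N+3M`;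
here `i : Fin N` stands for the 1-based variable index `i+1`, and `j : Fin M` for the 1-based
clause index `j+1` (so `3j` becomes `3*j.val+3` and `3j−1` becomes `3*j.val+2`). -/
def Tset {N M : ℕ} (C : Fin M → Finset (Bool × Fin N)) (i : Fin N) : Finset ℕ :=
  {N + 3*M - i.val, N + 3*M + i.val + 1} ∪
  ((Finset.univ.filter fun j : Fin M => (true, i) ∈ C j).image fun j => 3*j.val + 3) ∪
  ((Finset.univ.filter fun j : Fin M => (false, i) ∈ C j).image fun j => 3*j.val + 2)

/-- The set `F_i = {α−i+1, α+i} ∪ {3j : ¬x_i ∈ C_j} ∪ {3j−1 : x_i ∈ C_j}` where `α = N+3M`. -/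
def Fset {N M : ℕ} (C : Fin M → Finset (Bool × Fin N)) (i : Fin N) : Finset ℕ :=
  {N + 3*M - i.val, N + 3*M + i.val + 1} ∪
  ((Finset.univ.filter fun j : Fin M => (false, i) ∈ C j).image fun j => 3*j.val + 3) ∪
  ((Finset.univ.filter fun j : Fin M => (true, i) ∈ C j).image fun j => 3*j.val + 2)

open Finset

namespace ISCaux
variable {N M : ℕ} (C : Fin M → Finset (Bool × Fin N))

/-- index of a set in the family -/
def idxS : Fin N ⊕ Fin N → Fin N := Sum.elim id id

lemma mem_Tset (i : Fin N) (v : ℕ) :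
    v ∈ Tset C i ↔ v = N+3*M - i.val ∨ v = N+3*M+i.val+1 ∨
      (∃ j, (true,i) ∈ C j ∧ v = 3*j.val+3) ∨ (∃ j, (false,i) ∈ C j ∧ v = 3*j.val+2) := by
  simp only [Tset, mem_union, mem_insert, mem_singleton, mem_image, mem_filter, mem_univ, true_and]
  constructor
  · rintro (((h|h)|⟨j,hj,rfl⟩)|⟨j,hj,rfl⟩)
    · exact Or.inl h
    · exact Or.inr (Or.inl h)
    · exact Or.inr (Or.inr (Or.inl ⟨j, hj, rfl⟩))
    · exact Or.inr (Or.inr (Or.inr ⟨j, hj, rfl⟩))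
  · rintro (h|h|⟨j,hj,rfl⟩|⟨j,hj,rfl⟩)
    · exact Or.inl (Or.inl (Or.inl h))
    · exact Or.inl (Or.inl (Or.inr h))
    · exact Or.inl (Or.inr ⟨j, hj, rfl⟩)
    · exact Or.inr ⟨j, hj, rfl⟩

lemma mem_Fset (i : Fin N) (v : ℕ) :
    v ∈ Fset C i ↔ v = N+3*M - i.val ∨ v = N+3*M+i.val+1 ∨
      (∃ j, (false,i) ∈ C j ∧ v = 3*j.val+3) ∨ (∃ j, (true,i) ∈ C j ∧ v = 3*j.val+2) := by
  simp only [Fset, mem_union, mem_insert, mem_singleton, mem_image, mem_filter, mem_univ, true_and]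
  constructor
  · rintro (((h|h)|⟨j,hj,rfl⟩)|⟨j,hj,rfl⟩)
    · exact Or.inl h
    · exact Or.inr (Or.inl h)
    · exact Or.inr (Or.inr (Or.inl ⟨j, hj, rfl⟩))
    · exact Or.inr (Or.inr (Or.inr ⟨j, hj, rfl⟩))
  · rintro (h|h|⟨j,hj,rfl⟩|⟨j,hj,rfl⟩)
    · exact Or.inl (Or.inl (Or.inl h))
    · exact Or.inl (Or.inl (Or.inr h))
    · exact Or.inl (Or.inr ⟨j, hj, rfl⟩)
    · exact Or.inr ⟨j, hj, rfl⟩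

lemma S_filter_high (s : Fin N ⊕ Fin N) :
    (Sum.elim (Tset C) (Fset C) s).filter (fun v => 3*M+1 ≤ v)
      = {N+3*M - (idxS s).val, N+3*M + (idxS s).val + 1} := by
  rcases s with i | i <;>
  · ext v
    simp only [Sum.elim_inl, Sum.elim_inr, mem_filter, mem_Tset, mem_Fset, mem_insert,
      mem_singleton, idxS]
    have hi := i.isLt
    constructor
    · rintro ⟨(h|h|⟨j,hj,rfl⟩|⟨j,hj,rfl⟩), hv⟩
      · exact Or.inl h
      · exact Or.inr h
      · exact absurd hv (by have := j.isLt; omega)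
      · exact absurd hv (by have := j.isLt; omega)
    · rintro (rfl|rfl)
      · exact ⟨Or.inl rfl, by omega⟩
      · exact ⟨Or.inr (Or.inl rfl), by omega⟩

/-- key per-set sum over the clause part, for `φ` constant on clause blocks. -/
lemma S_filter_low_sum (s : Fin N ⊕ Fin N) (φ : ℕ → ℕ) (ψ : Fin M → ℕ)
    (h3 : ∀ j : Fin M, φ (3*j.val+3) = ψ j) (h2 : ∀ j : Fin M, φ (3*j.val+2) = ψ j) :
    ∑ v ∈ (Sum.elim (Tset C) (Fset C) s).filter (fun v => v ≤ 3*M), φ v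
      = ∑ j ∈ univ.filter (fun j => (true, idxS s) ∈ C j), ψ j
        + ∑ j ∈ univ.filter (fun j => (false, idxS s) ∈ C j), ψ j := by
  have hinj3 : ∀ (t : Finset (Fin M)), ∀ x ∈ t, ∀ y ∈ t, 3*x.val+3 = 3*y.val+3 → x = y := by
    intro t x _ y _ h; exact Fin.ext (by omega)
  have hinj2 : ∀ (t : Finset (Fin M)), ∀ x ∈ t, ∀ y ∈ t, 3*x.val+2 = 3*y.val+2 → x = y := by
    intro t x _ y _ h; exact Fin.ext (by omega)
  rcases s with i | i
  · have hset : (Sum.elim (Tset C) (Fset C) (Sum.inl i)).filter (fun v => v ≤ 3*M)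
        = ((univ.filter fun j : Fin M => (true, i) ∈ C j).image fun j => 3*j.val + 3)
          ∪ ((univ.filter fun j : Fin M => (false, i) ∈ C j).image fun j => 3*j.val + 2) := by
      ext v
      simp only [Sum.elim_inl, mem_filter, mem_Tset, mem_union, mem_image, mem_filter, mem_univ,
        true_and]
      have hi := i.isLt
      constructor
      · rintro ⟨(h|h|⟨j,hj,rfl⟩|⟨j,hj,rfl⟩), hv⟩
        · omega
        · omega
        · exact Or.inl ⟨j, hj, rfl⟩
        · exact Or.inr ⟨j, hj, rfl⟩
      · rintro (⟨j,hj,rfl⟩|⟨j,hj,rfl⟩)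
        · exact ⟨Or.inr (Or.inr (Or.inl ⟨j, hj, rfl⟩)), by have := j.isLt; omega⟩
        · exact ⟨Or.inr (Or.inr (Or.inr ⟨j, hj, rfl⟩)), by have := j.isLt; omega⟩
    rw [hset, sum_union, sum_image (hinj3 _), sum_image (hinj2 _)]
    · simp only [idxS, Sum.elim_inl, id]
      rw [sum_congr rfl (fun j _ => h3 j), sum_congr rfl (fun j _ => h2 j)]
      rfl
    · rw [disjoint_left]
      intro a ha hb
      simp only [mem_image, mem_filter, mem_univ, true_and] at ha hb
      obtain ⟨j, -, rfl⟩ := ha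
      obtain ⟨j', -, h⟩ := hb
      omega
  · have hset : (Sum.elim (Tset C) (Fset C) (Sum.inr i)).filter (fun v => v ≤ 3*M)
        = ((univ.filter fun j : Fin M => (false, i) ∈ C j).image fun j => 3*j.val + 3)
          ∪ ((univ.filter fun j : Fin M => (true, i) ∈ C j).image fun j => 3*j.val + 2) := by
      ext v
      simp only [Sum.elim_inr, mem_filter, mem_Fset, mem_union, mem_image, mem_filter, mem_univ,
        true_and]
      have hi := i.isLt
      constructor
      · rintro ⟨(h|h|⟨j,hj,rfl⟩|⟨j,hj,rfl⟩), hv⟩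
        · omega
        · omega
        · exact Or.inl ⟨j, hj, rfl⟩
        · exact Or.inr ⟨j, hj, rfl⟩
      · rintro (⟨j,hj,rfl⟩|⟨j,hj,rfl⟩)
        · exact ⟨Or.inr (Or.inr (Or.inl ⟨j, hj, rfl⟩)), by have := j.isLt; omega⟩
        · exact ⟨Or.inr (Or.inr (Or.inr ⟨j, hj, rfl⟩)), by have := j.isLt; omega⟩
    rw [hset, sum_union, sum_image (hinj3 _), sum_image (hinj2 _)]
    · simp only [idxS, Sum.elim_inr, id]
      rw [sum_congr rfl (fun j _ => h3 j), sum_congr rfl (fun j _ => h2 j), add_comm]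
      rfl
    · rw [disjoint_left]
      intro a ha hb
      simp only [mem_image, mem_filter, mem_univ, true_and] at ha hb
      obtain ⟨j, -, rfl⟩ := ha
      obtain ⟨j', -, h⟩ := hb
      omega

end ISCaux

open ISCaux in
/-- If the Inclusive Set Cover instance with ground set `{1,…,2N+3M}`, family
`(T_1,…,T_N,F_1,…,F_N)` and budget `k = N` is a yes-instance, then the 3-CNF formula with
clauses `C` (each a set of at most three literals) is satisfiable. -/
theorem stmt_1 {N M : ℕ} (C : Fin M → Finset (Bool × Fin N))
    (hsize : ∀ j, (C j).card ≤ 3)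
    (hyes : InclusiveSetCoverYes (2*N + 3*M) (Sum.elim (Tset C) (Fset C)) N) :
    ∃ σ : Fin N → Bool, ∀ j, ∃ l ∈ C j, σ l.2 = l.1 := by
  classical
  rcases Nat.eq_zero_or_pos M with hM | hM
  · exact ⟨fun _ => true, fun j => absurd j.isLt (by omega)⟩
  obtain ⟨R, f, hRcard, hsurj, hle⟩ := hyes
  rcases Nat.eq_zero_or_pos N with hN | hN
  · exfalso
    have h1 : (1:ℕ) ∈ Finset.Icc 1 (2*N+3*M) := by rw [Finset.mem_Icc]; omega
    obtain ⟨⟨⟨v, s⟩, hp⟩, -⟩ := hsurj ⟨1, h1⟩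
    rcases s with i | i <;> exact absurd i.isLt (by omega)
  choose g hgf using hsurj
  obtain ⟨G, hG_mem, hG_le, hG_inj⟩ :
      ∃ G : ℕ → ℕ × (Fin N ⊕ Fin N),
        (∀ u, u ∈ Finset.Icc 1 (2*N+3*M) →
          (G u).2 ∈ R ∧ (G u).1 ∈ Sum.elim (Tset C) (Fset C) (G u).2) ∧
        (∀ u, u ∈ Finset.Icc 1 (2*N+3*M) → u ≤ (G u).1) ∧
        (∀ u₁ ∈ Finset.Icc 1 (2*N+3*M), ∀ u₂ ∈ Finset.Icc 1 (2*N+3*M), G u₁ = G u₂ → u₁ = u₂) := by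
    refine ⟨fun u => if h : u ∈ Finset.Icc 1 (2*N+3*M) then (g ⟨u, h⟩).1
      else (0, Sum.inl ⟨0, hN⟩), ?_, ?_, ?_⟩
    · intro u h; simp only [dif_pos h]; exact ⟨(g ⟨u,h⟩).2.1, (g ⟨u,h⟩).2.2⟩
    · intro u h; simp only [dif_pos h]
      have h2 := hle (g ⟨u, h⟩)
      rw [hgf ⟨u, h⟩] at h2
      exact h2
    · intro u₁ h₁ u₂ h₂ he
      simp only [dif_pos h₁, dif_pos h₂] at he
      have h3 : g ⟨u₁,h₁⟩ = g ⟨u₂,h₂⟩ := Subtype.ext he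
      have h4 := congrArg f h3
      rw [hgf, hgf] at h4
      exact congrArg Subtype.val h4
  obtain ⟨D, hD⟩ :
      ∃ D : Finset (ℕ × (Fin N ⊕ Fin N)),
        ∀ p, p ∈ D ↔ p.2 ∈ R ∧ p.1 ∈ Sum.elim (Tset C) (Fset C) p.2 := by
    refine ⟨R.biUnion (fun s => (Sum.elim (Tset C) (Fset C) s).image (fun v => (v, s))), ?_⟩
    rintro ⟨v, s⟩
    simp only [Finset.mem_biUnion, Finset.mem_image, Prod.mk.injEq]
    constructor
    · rintro ⟨s', hs', v', hv', rfl, rfl⟩; exact ⟨hs', hv'⟩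
    · rintro ⟨hs, hv⟩; exact ⟨s, hs, v, hv, rfl, rfl⟩
  have hDsum : ∀ (q : ℕ → Prop) (_ : DecidablePred q) (φ : ℕ → ℕ),
      ∑ p ∈ D.filter (fun p => q p.1), φ p.1
        = ∑ s ∈ R, ∑ v ∈ (Sum.elim (Tset C) (Fset C) s).filter q, φ v := by
    intro q hq φ
    have hDq : D.filter (fun p => q p.1)
        = R.biUnion (fun s => ((Sum.elim (Tset C) (Fset C) s).filter q).image (fun v => (v, s))) := by
      ext ⟨v, s⟩
      simp only [Finset.mem_filter, hD, Finset.mem_biUnion, Finset.mem_image, Prod.mk.injEq]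
      constructor
      · rintro ⟨⟨hs, hv⟩, hqv⟩; exact ⟨s, hs, v, ⟨hv, hqv⟩, rfl, rfl⟩
      · rintro ⟨s', hs', v', ⟨hv', hq'⟩, rfl, rfl⟩; exact ⟨⟨hs', hv'⟩, hq'⟩
    rw [hDq, Finset.sum_biUnion]
    · exact Finset.sum_congr rfl (fun s _ =>
        Finset.sum_image (fun x _ y _ h => (Prod.mk.injEq _ _ _ _ ▸ h).1))
    · intro s _ s' _ hne
      apply Finset.disjoint_left.mpr
      intro p hp hp'
      simp only [Finset.mem_image] at hp hp'
      obtain ⟨v1, -, rfl⟩ := hp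
      obtain ⟨v2, -, heq⟩ := hp'
      exact hne ((Prod.mk.injEq _ _ _ _ ▸ heq).2.symm)
  -- high part
  have hhigh_sum : ∀ φ : ℕ → ℕ,
      ∑ p ∈ D.filter (fun p => 3*M+1 ≤ p.1), φ p.1
        = ∑ s ∈ R, (φ (N+3*M - (idxS s).val) + φ (N+3*M + (idxS s).val + 1)) := by
    intro φ
    rw [hDsum _ inferInstance]
    refine Finset.sum_congr rfl (fun s _ => ?_)
    rw [S_filter_high, Finset.sum_pair (by omega)]
  have hP1card : (D.filter (fun p => 3*M+1 ≤ p.1)).card = 2 * R.card := by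
    have h := hhigh_sum (fun _ => 1)
    simp only [Finset.sum_const, smul_eq_mul, mul_one] at h
    omega
  have hIccsub : ∀ u ∈ Finset.Icc (3*M+1) (2*N+3*M), u ∈ Finset.Icc 1 (2*N+3*M) := by
    intro u hu; rw [Finset.mem_Icc] at *; omega
  have hG_high : ∀ u ∈ Finset.Icc (3*M+1) (2*N+3*M), G u ∈ D.filter (fun p => 3*M+1 ≤ p.1) := by
    intro u hu
    rw [Finset.mem_filter, hD]
    have h1 := hG_mem u (hIccsub u hu)
    have h2 := hG_le u (hIccsub u hu)
    rw [Finset.mem_Icc] at hu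
    exact ⟨⟨h1.1, h1.2⟩, by omega⟩
  have hcard1 : (Finset.Icc (3*M+1) (2*N+3*M)).card ≤ (D.filter (fun p => 3*M+1 ≤ p.1)).card :=
    Finset.card_le_card_of_injOn G hG_high
      (fun a ha b hb h => hG_inj a (hIccsub a ha) b (hIccsub b hb) h)
  have hIcchigh : (Finset.Icc (3*M+1) (2*N+3*M)).card = 2*N := by rw [Nat.card_Icc]; omega
  have hRN : R.card = N := by omega
  have hsurj_high : ∀ p ∈ D.filter (fun p => 3*M+1 ≤ p.1),
      ∃ u, ∃ _ : u ∈ Finset.Icc (3*M+1) (2*N+3*M), p = G u :=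
    Finset.surj_on_of_inj_on_of_card_le (fun u _ => G u) (fun u hu => hG_high u hu)
      (fun a b ha hb h => hG_inj a (hIccsub a ha) b (hIccsub b hb) h) (by omega)
  have htrans_high : ∑ u ∈ Finset.Icc (3*M+1) (2*N+3*M), (G u).1
      = ∑ p ∈ D.filter (fun p => 3*M+1 ≤ p.1), p.1 :=
    Finset.sum_bij (fun u _ => G u) (fun u hu => hG_high u hu)
      (fun a ha b hb h => hG_inj a (hIccsub a ha) b (hIccsub b hb) h)
      (fun p hp => by obtain ⟨u, hu, hpe⟩ := hsurj_high p hp; exact ⟨u, hu, hpe.symm⟩)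
      (fun u _ => rfl)
  have hPairsum : ∑ p ∈ D.filter (fun p => 3*M+1 ≤ p.1), p.1 = N * (2*(N+3*M)+1) := by
    have h := hhigh_sum id
    simp only [id_eq] at h
    rw [h]
    have h2 : ∀ s ∈ R, (N+3*M - (idxS s).val) + (N+3*M + (idxS s).val + 1) = 2*(N+3*M)+1 := by
      intro s _; have := (idxS s).isLt; omega
    rw [Finset.sum_congr rfl h2, Finset.sum_const, hRN, smul_eq_mul]
  have hIccsum : ∑ u ∈ Finset.Icc (3*M+1) (2*N+3*M), u = N * (2*(N+3*M)+1) := by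
    have himg : Finset.Icc (3*M+1) (2*N+3*M) = (Finset.range (2*N)).image (fun d => 3*M+1+d) := by
      ext u
      simp only [Finset.mem_Icc, Finset.mem_image, Finset.mem_range]
      constructor
      · intro h; exact ⟨u - (3*M+1), by omega, by omega⟩
      · rintro ⟨d, hd, rfl⟩; omega
    rw [himg, Finset.sum_image (fun x _ y _ h => by omega)]
    have hd : ∑ d ∈ Finset.range (2*N), (3*M+1+d)
        = 2*N * (3*M+1) + ∑ d ∈ Finset.range (2*N), d := by
      rw [Finset.sum_add_distrib, Finset.sum_const, Finset.card_range, smul_eq_mul]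
    rw [hd]
    have hga : (∑ d ∈ Finset.range (2*N), d) * 2 = 2*N * (2*N - 1) :=
      Finset.sum_range_id_mul_two (2*N)
    have key : (2*N * (3*M+1) + ∑ d ∈ Finset.range (2*N), d) * 2 = (N * (2*(N+3*M)+1)) * 2 := by
      obtain ⟨N', rfl⟩ : ∃ N', N = N'+1 := ⟨N-1, by omega⟩
      have h6 : 2*(N'+1) - 1 = 2*N'+1 := by omega
      rw [add_mul, hga, h6]; ring
    exact Nat.eq_of_mul_eq_mul_right (by norm_num) key
  have hsum_high_eq : ∑ u ∈ Finset.Icc (3*M+1) (2*N+3*M), u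
      = ∑ u ∈ Finset.Icc (3*M+1) (2*N+3*M), (G u).1 := by
    rw [htrans_high, hPairsum, hIccsum]
  have hpoint_high : ∀ u ∈ Finset.Icc (3*M+1) (2*N+3*M), u = (G u).1 :=
    (Finset.sum_eq_sum_iff_of_le (fun u hu => hG_le u (hIccsub u hu))).mp hsum_high_eq
  -- every variable represented
  have hvar : ∀ i : Fin N, Sum.inl i ∈ R ∨ Sum.inr i ∈ R := by
    intro i
    have hu : (N+3*M+i.val+1) ∈ Finset.Icc (3*M+1) (2*N+3*M) := by
      rw [Finset.mem_Icc]; have := i.isLt; omega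
    have hval := hpoint_high _ hu
    have hmem := hG_mem _ (hIccsub _ hu)
    rw [← hval] at hmem
    rcases hs : (G (N+3*M+i.val+1)).2 with a | a <;> rw [hs] at hmem
    · left
      have hm2 := hmem.2
      rw [Sum.elim_inl, mem_Tset] at hm2
      rcases hm2 with h|h|⟨j,hj,h⟩|⟨j,hj,h⟩
      · exact absurd h (by have := a.isLt; omega)
      · have ha : a = i := Fin.ext (by omega)
        rw [← ha]; exact hmem.1
      · exact absurd h (by have := j.isLt; omega)
      · exact absurd h (by have := j.isLt; omega)
    · right
      have hm2 := hmem.2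
      rw [Sum.elim_inr, mem_Fset] at hm2
      rcases hm2 with h|h|⟨j,hj,h⟩|⟨j,hj,h⟩
      · exact absurd h (by have := a.isLt; omega)
      · have ha : a = i := Fin.ext (by omega)
        rw [← ha]; exact hmem.1
      · exact absurd h (by have := j.isLt; omega)
      · exact absurd h (by have := j.isLt; omega)
  have hvar' : ∀ i : Fin N, (if Sum.inl i ∈ R then Sum.inl i else Sum.inr i) ∈ R := by
    intro i; by_cases h : Sum.inl i ∈ R
    · rw [if_pos h]; exact h
    · rw [if_neg h]
      rcases hvar i with h'|h'
      · exact absurd h' h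
      · exact h'
  have hidxe : ∀ i : Fin N, idxS (if Sum.inl i ∈ R then Sum.inl i else Sum.inr i) = i := by
    intro i; by_cases h : Sum.inl i ∈ R
    · rw [if_pos h]; rfl
    · rw [if_neg h]; rfl
  have he_inj : ∀ x y : Fin N,
      (if Sum.inl x ∈ R then Sum.inl x else Sum.inr x)
        = (if Sum.inl y ∈ R then Sum.inl y else Sum.inr y) → x = y := by
    intro x y h
    have := congrArg idxS h
    rwa [hidxe, hidxe] at this
  have hRe : R = Finset.univ.image (fun i : Fin N => if Sum.inl i ∈ R then Sum.inl i else Sum.inr i) := by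
    symm
    apply Finset.eq_of_subset_of_card_le
    · intro s hs
      simp only [Finset.mem_image] at hs
      obtain ⟨i, -, rfl⟩ := hs
      exact hvar' i
    · rw [Finset.card_image_of_injOn (fun x _ y _ h => he_inj x y h), Finset.card_univ,
        Fintype.card_fin, hRN]
  have hsumR : ∀ F : (Fin N ⊕ Fin N) → ℕ,
      ∑ s ∈ R, F s = ∑ i : Fin N, F (if Sum.inl i ∈ R then Sum.inl i else Sum.inr i) := by
    intro F
    conv_lhs => rw [hRe]
    exact Finset.sum_image (fun x _ y _ h => he_inj x y h)
  -- low part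
  have hlow_sum : ∀ (φ : ℕ → ℕ) (ψ : Fin M → ℕ),
      (∀ j : Fin M, φ (3*j.val+3) = ψ j) → (∀ j : Fin M, φ (3*j.val+2) = ψ j) →
      ∑ p ∈ D.filter (fun p => p.1 ≤ 3*M), φ p.1 = ∑ j : Fin M, (C j).card * ψ j := by
    intro φ ψ h3 h2
    refine (hDsum (fun v => v ≤ 3*M) inferInstance φ).trans ?_
    rw [Finset.sum_congr rfl (fun s _ => S_filter_low_sum C s φ ψ h3 h2)]
    rw [hsumR]
    rw [Finset.sum_congr rfl (fun i _ => by rw [hidxe i])]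
    have hstep : ∀ i : Fin N,
        ((∑ j ∈ univ.filter (fun j => (true, i) ∈ C j), ψ j)
          + ∑ j ∈ univ.filter (fun j => (false, i) ∈ C j), ψ j)
        = ∑ j : Fin M, ((if (true, i) ∈ C j then ψ j else 0)
            + (if (false, i) ∈ C j then ψ j else 0)) := by
      intro i; rw [Finset.sum_filter, Finset.sum_filter, Finset.sum_add_distrib]
    rw [Finset.sum_congr rfl (fun i _ => hstep i), Finset.sum_comm]
    refine Finset.sum_congr rfl (fun j _ => ?_)
    have hl : ∑ l : Bool × Fin N, (if l ∈ C j then ψ j else 0) = (C j).card * ψ j := by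
      rw [Finset.sum_ite_mem, Finset.univ_inter, Finset.sum_const, smul_eq_mul]
    rw [← hl, Fintype.sum_prod_type, Fintype.sum_bool, Finset.sum_add_distrib]
  have hP0card_eq : (D.filter (fun p => p.1 ≤ 3*M)).card = ∑ j : Fin M, (C j).card := by
    rw [Finset.card_eq_sum_ones]
    have h := hlow_sum (fun _ => 1) (fun _ => 1) (fun _ => rfl) (fun _ => rfl)
    simp only [mul_one] at h
    exact h
  have hP0le : (D.filter (fun p => p.1 ≤ 3*M)).card ≤ 3*M := by
    rw [hP0card_eq]
    calc ∑ j : Fin M, (C j).card ≤ ∑ _j : Fin M, 3 :=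
          Finset.sum_le_sum (fun j _ => hsize j)
      _ = 3*M := by rw [Finset.sum_const, Finset.card_univ, Fintype.card_fin, smul_eq_mul]; ring
  have hIccsub' : ∀ u ∈ Finset.Icc 1 (3*M), u ∈ Finset.Icc 1 (2*N+3*M) := by
    intro u hu; rw [Finset.mem_Icc] at *; omega
  have hG_low : ∀ u ∈ Finset.Icc 1 (3*M), G u ∈ D.filter (fun p => p.1 ≤ 3*M) := by
    intro u hu
    rw [Finset.mem_filter, hD]
    have h1 := hG_mem u (hIccsub' u hu)
    refine ⟨⟨h1.1, h1.2⟩, ?_⟩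
    by_contra hgt
    push_neg at hgt
    have hfil : G u ∈ D.filter (fun p => 3*M+1 ≤ p.1) := by
      rw [Finset.mem_filter, hD]; exact ⟨⟨h1.1, h1.2⟩, by omega⟩
    obtain ⟨u', hu', heq⟩ := hsurj_high _ hfil
    have := hG_inj u' (hIccsub u' hu') u (hIccsub' u hu) heq.symm
    rw [Finset.mem_Icc] at hu hu'
    omega
  have hcard2 : 3*M ≤ (D.filter (fun p => p.1 ≤ 3*M)).card := by
    have h := Finset.card_le_card_of_injOn G hG_low
      (fun a ha b hb h => hG_inj a (hIccsub' a ha) b (hIccsub' b hb) h)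
    rw [Nat.card_Icc] at h
    omega
  have hsurj_low : ∀ p ∈ D.filter (fun p => p.1 ≤ 3*M),
      ∃ u, ∃ _ : u ∈ Finset.Icc 1 (3*M), p = G u :=
    Finset.surj_on_of_inj_on_of_card_le (fun u _ => G u) (fun u hu => hG_low u hu)
      (fun a b ha hb h => hG_inj a (hIccsub' a ha) b (hIccsub' b hb) h)
      (by rw [Nat.card_Icc]; omega)
  have htrans_low : ∑ u ∈ Finset.Icc 1 (3*M), ((G u).1 - 1)/3
      = ∑ p ∈ D.filter (fun p => p.1 ≤ 3*M), (p.1 - 1)/3 :=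
    Finset.sum_bij (fun u _ => G u) (fun u hu => hG_low u hu)
      (fun a ha b hb h => hG_inj a (hIccsub' a ha) b (hIccsub' b hb) h)
      (fun p hp => by obtain ⟨u, hu, hpe⟩ := hsurj_low p hp; exact ⟨u, hu, hpe.symm⟩)
      (fun u _ => rfl)
  have hpairs_b : ∑ p ∈ D.filter (fun p => p.1 ≤ 3*M), (p.1-1)/3 = ∑ j : Fin M, (C j).card * j.val :=
    hlow_sum (fun v => (v-1)/3) (fun j => j.val) (fun j => by show (3*(j:ℕ)+3-1)/3 = (j:ℕ); omega) (fun j => by show (3*(j:ℕ)+2-1)/3 = (j:ℕ); omega)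
  have htarget_b : ∑ u ∈ Finset.Icc 1 (3*M), (u-1)/3 = ∑ j : Fin M, 3 * j.val := by
    have himg : Finset.Icc 1 (3*M) = ((Finset.range M) ×ˢ (Finset.range 3)).image (fun q => 3*q.1+q.2+1) := by
      ext u
      simp only [Finset.mem_Icc, Finset.mem_image, Finset.mem_product, Finset.mem_range]
      constructor
      · intro h; exact ⟨⟨(u-1)/3, (u-1)%3⟩, ⟨by omega, by omega⟩, by omega⟩
      · rintro ⟨⟨a, b⟩, ⟨ha, hb⟩, rfl⟩
        constructor <;> omega
    rw [himg, Finset.sum_image (fun x hx y hy h => by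
      simp only [Finset.mem_coe, Finset.mem_product, Finset.mem_range] at hx hy
      exact Prod.ext (by omega) (by omega))]
    have hcg : ∀ q ∈ (Finset.range M) ×ˢ (Finset.range 3), (3*q.1+q.2+1-1)/3 = q.1 := by
      intro q hq
      simp only [Finset.mem_product, Finset.mem_range] at hq
      omega
    rw [Finset.sum_congr rfl hcg, Finset.sum_product]
    rw [Finset.sum_congr rfl (fun a _ => by
      rw [Finset.sum_const, Finset.card_range, smul_eq_mul])]
    rw [← Fin.sum_univ_eq_sum_range (fun j => 3*j) M]
  have hble : ∀ u ∈ Finset.Icc 1 (3*M), (u-1)/3 ≤ ((G u).1 - 1)/3 := by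
    intro u hu
    have := hG_le u (hIccsub' u hu)
    exact Nat.div_le_div_right (by omega)
  have hsum_b_eq : ∑ u ∈ Finset.Icc 1 (3*M), (u-1)/3
      = ∑ u ∈ Finset.Icc 1 (3*M), ((G u).1 - 1)/3 := by
    refine le_antisymm (Finset.sum_le_sum hble) ?_
    rw [htrans_low, hpairs_b, htarget_b]
    exact Finset.sum_le_sum (fun j _ => Nat.mul_le_mul_right _ (hsize j))
  have hpoint_b : ∀ u ∈ Finset.Icc 1 (3*M), (u-1)/3 = ((G u).1 - 1)/3 :=
    (Finset.sum_eq_sum_iff_of_le hble).mp hsum_b_eq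
  -- conclusion
  refine ⟨fun i => decide (Sum.inl i ∈ R), fun j => ?_⟩
  have hj3 : 3*j.val+3 ∈ Finset.Icc 1 (3*M) := by
    rw [Finset.mem_Icc]; have := j.isLt; omega
  have h1 := hpoint_b _ hj3
  have h2 : 3*j.val+3 ≤ (G (3*j.val+3)).1 := hG_le _ (hIccsub' _ hj3)
  have h3 : (G (3*j.val+3)).1 ≤ 3*M := (Finset.mem_filter.mp (hG_low _ hj3)).2
  have hveq : (G (3*j.val+3)).1 = 3*j.val+3 := by omega
  have hmem := hG_mem _ (hIccsub' _ hj3)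
  rw [hveq] at hmem
  rcases hs : (G (3*j.val+3)).2 with a | a <;> rw [hs] at hmem
  · have hm2 := hmem.2
    rw [Sum.elim_inl, mem_Tset] at hm2
    rcases hm2 with h|h|⟨j',hj',h⟩|⟨j',hj',h⟩
    · exact absurd h (by have := a.isLt; have := j.isLt; omega)
    · exact absurd h (by have := j.isLt; omega)
    · have hjj : j' = j := Fin.ext (by omega)
      subst hjj
      exact ⟨(true, a), hj', by simp only [decide_eq_true_eq]; exact hmem.1⟩
    · exact absurd h (by omega)
  · have hm2 := hmem.2
    rw [Sum.elim_inr, mem_Fset] at hm2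
    have hnotl : Sum.inl a ∉ R := by
      intro hin
      have hinr := hmem.1
      rw [hRe, Finset.mem_image] at hinr
      obtain ⟨i', -, hei⟩ := hinr
      by_cases hc : Sum.inl i' ∈ R
      · rw [if_pos hc] at hei; exact Sum.inl_ne_inr hei
      · rw [if_neg hc] at hei
        have hia : i' = a := Sum.inr.inj hei
        exact hc (hia ▸ hin)
    rcases hm2 with h|h|⟨j',hj',h⟩|⟨j',hj',h⟩
    · exact absurd h (by have := a.isLt; have := j.isLt; omega)
    · exact absurd h (by have := j.isLt; omega)
    · have hjj : j' = j := Fin.ext (by omega)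
      subst hjj
      refine ⟨(false, a), hj', ?_⟩
      simp only [decide_eq_false_iff_not]
      exact hnotl
    · exact absurd h (by omega)
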